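/- Let M₁, M₂ be positive semidefinite operators on a nontrivial finite-dimensional complex Hilbert space with M₁ + M₂ = I. Then there exists a density operator ξ with M₁ ξ M₂ = 0 if and only if M₁ or M₂ is not invertible (i.e., at least one effect is rank deficient). -/

import Mathlib

open scoped InnerProductSpace

/-- Rank-one operator `x ↦ ⟪v, x⟫ • v`. -/
noncomputable def rankOneOp {d : ℕ} (v : EuclideanSpace ℂ (Fin d)) :
    EuclideanSpace ℂ (Fin d) →L[ℂ] EuclideanSpace ℂ (Fin d) :=
  (innerSL ℂ v).smulRight v

lemma rankOneOp_apply {d : ℕ} (v x : EuclideanSpace ℂ (Fin d)) :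
    rankOneOp v x = ⟪v, x⟫_ℂ • v := rfl

lemma rankOneOp_pos {d : ℕ} (v : EuclideanSpace ℂ (Fin d)) : (rankOneOp v).IsPositive := by
  rw [ContinuousLinearMap.isPositive_iff_complex]
  intro x
  rw [rankOneOp_apply, inner_smul_left, RCLike.conj_mul]
  refine ⟨?_, ?_⟩ <;> norm_cast
  positivity

lemma rankOneOp_trace {d : ℕ} (v : EuclideanSpace ℂ (Fin d)) (hv : ‖v‖ = 1) :
    LinearMap.trace ℂ (EuclideanSpace ℂ (Fin d))
      ((rankOneOp v : _ →L[ℂ] _) :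
        EuclideanSpace ℂ (Fin d) →ₗ[ℂ] EuclideanSpace ℂ (Fin d)) = 1 := by
  classical
  rw [LinearMap.trace_eq_matrix_trace ℂ (EuclideanSpace.basisFun (Fin d) ℂ).toBasis]
  have h2 : (⟪v, v⟫_ℂ) = 1 := by
    rw [inner_self_eq_norm_sq_to_K, hv]; norm_num
  rw [← h2]
  simp [Matrix.trace, Matrix.diag, LinearMap.toMatrix_apply, rankOneOp,
    EuclideanSpace.inner_eq_star_dotProduct]
  rw [← Complex.ofReal_pow, EuclideanSpace.norm_sq_eq]; push_cast; simp [Complex.conj_mul']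

lemma nonunit_kernel {d : ℕ} (T : EuclideanSpace ℂ (Fin d) →L[ℂ] EuclideanSpace ℂ (Fin d))
    (h : ¬ IsUnit T) : ∃ v : EuclideanSpace ℂ (Fin d), T v = 0 ∧ ‖v‖ = 1 := by
  rw [ContinuousLinearMap.isUnit_iff_bijective] at h
  have hinj : ¬ Function.Injective T := by
    intro hi
    exact h ⟨hi, (LinearMap.injective_iff_surjective (f := (T : EuclideanSpace ℂ (Fin d) →ₗ[ℂ] EuclideanSpace ℂ (Fin d)))).mp hi⟩
  obtain ⟨x, y, hxy, hne⟩ := Function.not_injective_iff.mp hinj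
  have hsub : x - y ≠ 0 := sub_ne_zero.mpr hne
  refine ⟨‖x - y‖⁻¹ • (x - y), ?_, ?_⟩
  · simp [map_sub, hxy]
  · rw [norm_smul]
    simp [inv_mul_cancel₀ (norm_ne_zero_iff.mpr hsub)]

/-- Perfect single-shot labeling of a binary observable {M₁, M₂}: a density operator
ξ with M₁ ξ M₂ = 0 exists iff at least one of the effects is not invertible. -/
theorem perfect_labeling_iff_rank_deficient (d : ℕ) (hd : 0 < d)
    (M₁ M₂ : EuclideanSpace ℂ (Fin d) →L[ℂ] EuclideanSpace ℂ (Fin d))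
    (h₁ : M₁.IsPositive) (h₂ : M₂.IsPositive) (hsum : M₁ + M₂ = 1) :
    (∃ ξ : EuclideanSpace ℂ (Fin d) →L[ℂ] EuclideanSpace ℂ (Fin d),
        ξ.IsPositive ∧
        LinearMap.trace ℂ (EuclideanSpace ℂ (Fin d))
          (ξ : EuclideanSpace ℂ (Fin d) →ₗ[ℂ] EuclideanSpace ℂ (Fin d)) = 1 ∧
        M₁ * ξ * M₂ = 0) ↔ (¬ IsUnit M₁ ∨ ¬ IsUnit M₂) := by
  constructor
  · rintro ⟨ξ, hpos, htr, hzero⟩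
    by_contra hcon
    push_neg at hcon
    obtain ⟨hu₁, hu₂⟩ := hcon
    have h1 : ξ * M₂ = 0 := by
      apply hu₁.mul_left_cancel
      rw [← mul_assoc, hzero, mul_zero]
    have h2 : ξ = 0 := by
      apply hu₂.mul_right_cancel
      rw [h1, zero_mul]
    rw [h2] at htr
    simp at htr
  · rintro (h | h)
    · obtain ⟨v, hv0, hv1⟩ := nonunit_kernel M₁ h
      refine ⟨rankOneOp v, rankOneOp_pos v, rankOneOp_trace v hv1, ?_⟩
      ext x
      simp [ContinuousLinearMap.mul_apply, rankOneOp_apply, map_smul, hv0]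
    · obtain ⟨v, hv0, hv1⟩ := nonunit_kernel M₂ h
      refine ⟨rankOneOp v, rankOneOp_pos v, rankOneOp_trace v hv1, ?_⟩
      ext x
      have hinner : ⟪v, M₂ x⟫_ℂ = 0 := by
        have hsa : ContinuousLinearMap.adjoint M₂ = M₂ := h₂.isSelfAdjoint.adjoint_eq
        rw [← hsa, ContinuousLinearMap.adjoint_inner_right, hv0, inner_zero_left]
      simp [ContinuousLinearMap.mul_apply, rankOneOp_apply, hinner]
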